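/- Under the standing hypotheses including (♠), φ is additive on each diagonal Peirce component: for i ∈ {1,2} and A_{ii}, B_{ii} ∈ 𝔄_{ii}, φ(A_{ii} + B_{ii}) = φ(A_{ii}) + φ(B_{ii}). -/

import Mathlib

/-- The *-Jordan product `{A,B}_* = AB + BA*`. -/
def jstar {R : Type*} [Ring R] [StarRing R] (A B : R) : R := A * B + B * star A

/-- The iterated *-Jordan product `q_{n*}(x_1, ..., x_n)`. -/
def qstar {R : Type*} [Ring R] [StarRing R] : List R → R
  | [] => 0
  | x :: xs => xs.foldl jstar x

section RingAux

variable {R : Type*} [Ring R] [StarRing R]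

lemma jstar_def (a b : R) : jstar a b = a * b + b * star a := rfl

lemma jstar_add_left (a b c : R) : jstar (a + b) c = jstar a c + jstar b c := by
  simp only [jstar, add_mul, mul_add, star_add]
  abel

lemma jstar_add_right (a b c : R) : jstar a (b + c) = jstar a b + jstar a c := by
  simp only [jstar, mul_add, add_mul]
  abel

set_option linter.unusedSectionVars false

lemma star_nsmul'' (m : ℕ) (x : R) : star (m • x) = m • star x := by
  induction m with
  | zero => simp
  | succ i ih => rw [succ_nsmul, star_add, ih, succ_nsmul]

lemma jstar_nsmul_left (m : ℕ) (a b : R) : jstar (m • a) b = m • jstar a b := by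
  simp only [jstar, smul_mul_assoc, mul_smul_comm, star_nsmul'', smul_add]

lemma foldl_ones (m : ℕ) : ∀ (c : R), star c = c →
    (List.replicate m (1 : R)).foldl jstar c = 2 ^ m • c := by
  induction m with
  | zero => intro c _; simp
  | succ i ih =>
    intro c hc
    rw [List.replicate_succ, List.foldl_cons]
    have h1 : jstar c 1 = 2 • c := by
      simp [jstar, hc, two_smul]
    rw [h1, ih (2 • c) (by rw [star_nsmul'', hc]), smul_smul, ← pow_succ]

lemma qstar_ones (m : ℕ) (A B : R) :
    qstar (List.replicate m (1 : R) ++ [A, B]) = 2 ^ m • jstar A B := by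
  cases m with
  | zero => simp [qstar]
  | succ i =>
    rw [List.replicate_succ, List.cons_append]
    show (List.replicate i (1:R) ++ [A, B]).foldl jstar 1 = _
    rw [List.foldl_append, foldl_ones i 1 (star_one R)]
    simp only [List.foldl_cons, List.foldl_nil]
    rw [jstar_nsmul_left]
    have h3 : jstar (1 : R) A = 2 • A := by simp [jstar, two_smul]
    rw [h3, smul_smul, ← pow_succ, jstar_nsmul_left]

lemma mzh {x y e f : R} (h1 : x * e = x) (h2 : f * y = y) (hef : e * f = 0) : x * y = 0 := by
  rw [← h1, ← h2, mul_assoc, ← mul_assoc e f y, hef, zero_mul, mul_zero]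

lemma corner_left {e f x : R} (hee : e * e = e) (hx : e * x * f = x) : e * x = x := by
  conv_lhs => rw [← hx]
  rw [← mul_assoc, ← mul_assoc, hee, hx]

lemma corner_right {e f x : R} (hff : f * f = f) (hx : e * x * f = x) : x * f = x := by
  conv_lhs => rw [← hx]
  rw [mul_assoc, hff, hx]

lemma left_zero {g e x : R} (hge : g * e = 0) (hx : e * x = x) : g * x = 0 := by
  rw [← hx, ← mul_assoc, hge, zero_mul]

lemma right_zero {x e g : R} (heg : e * g = 0) (hx : x * e = x) : x * g = 0 := by
  rw [← hx, mul_assoc, heg, mul_zero]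

lemma corner_mul {e f x y : R} (hx : e * x = x) (hy : y * f = y) : e * (x * y) * f = x * y := by
  rw [← mul_assoc, hx, mul_assoc, hy]

lemma proj_add (e f u v : R) : e * (u + v) * f = e * u * f + e * v * f := by
  rw [mul_add, add_mul]

lemma proj_smul (m : ℕ) (e f u : R) : e * (m • u) * f = m • (e * u * f) := by
  rw [mul_smul_comm, smul_mul_assoc]

lemma corner_idem {p q : R} (hpp : p * p = p) (hqq : q * q = q) (S : R) :
    p * (p * S * q) * q = p * S * q :=
  corner_mul (by rw [← mul_assoc, hpp]) hqq

lemma proj_eval_zero_left {g e x : R} (hge : g * e = 0) (hex : e * x = x) (h' : R) :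
    g * x * h' = 0 := by
  rw [left_zero hge hex, zero_mul]

lemma proj_eval_zero_right {x e g : R} (heg : e * g = 0) (hxe : x * e = x) (f' : R) :
    f' * x * g = 0 := by
  rw [mul_assoc, right_zero heg hxe, mul_zero]

lemma star_corner {e f x : R} (hes : star e = e) (hfs : star f = f) (hx : e * x * f = x) :
    f * star x * e = star x := by
  have h := congrArg star hx
  rw [star_mul, star_mul, hes, hfs] at h
  rw [mul_assoc]
  exact h

lemma comps {p q S w : R} (hqq : q * q = q) (hpq : p * q = 0) (hqp : q * p = 0)
    (h : q * S + S * q = w) :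
    p * S * q = p * w * q ∧ q * S * p = q * w * p ∧ q * S * q + q * S * q = q * w * q := by
  refine ⟨?_, ?_, ?_⟩
  · have e1 := congrArg (fun x => p * x * q) h
    simp only [mul_add, add_mul] at e1
    rw [show p * (q * S) * q = 0 from by rw [← mul_assoc, hpq, zero_mul, zero_mul],
        show p * (S * q) * q = p * S * q from by rw [← mul_assoc, mul_assoc, hqq],
        zero_add] at e1
    exact e1
  · have e1 := congrArg (fun x => q * x * p) h
    simp only [mul_add, add_mul] at e1
    rw [show q * (q * S) * p = q * S * p from by rw [← mul_assoc, hqq],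
        show q * (S * q) * p = 0 from by rw [← mul_assoc, mul_assoc, hqp, mul_zero],
        add_zero] at e1
    exact e1
  · have e1 := congrArg (fun x => q * x * q) h
    simp only [mul_add, add_mul] at e1
    rw [show q * (q * S) * q = q * S * q from by rw [← mul_assoc, hqq],
        show q * (S * q) * q = q * S * q from by rw [← mul_assoc, mul_assoc, hqq]] at e1
    exact e1

lemma decomp {p q : R} (h1 : p + q = 1) (S : R) :
    S = p * S * p + p * S * q + (q * S * p + q * S * q) := by
  have h2 : (p + q) * S * (p + q) = p * S * p + p * S * q + (q * S * p + q * S * q) := by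
    simp only [add_mul, mul_add]
    abel
  rw [h1, one_mul, mul_one] at h2
  exact h2

lemma proj_compl_sq {e : R} (he : e * e = e) : (1 - e) * (1 - e) = 1 - e := by
  rw [sub_mul, one_mul, mul_sub, mul_one, he, sub_self, sub_zero]

lemma proj_mul_compl {e : R} (he : e * e = e) : e * (1 - e) = 0 := by
  rw [mul_sub, mul_one, he, sub_self]

lemma compl_mul_proj {e : R} (he : e * e = e) : (1 - e) * e = 0 := by
  rw [sub_mul, one_mul, he, sub_self]

lemma jproj_same {e x : R} (hee : e * e = e) (hes : star e = e) (hx : e * x * e = x) :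
    jstar e x = x + x := by
  rw [jstar_def, hes, corner_left hee hx, corner_right hee hx]

lemma jproj_opp {e f x : R} (hes : star e = e) (hef : e * f = 0) (hfe : f * e = 0)
    (hff : f * f = f) (hx : f * x * f = x) : jstar e x = 0 := by
  rw [jstar_def, hes, left_zero hef (corner_left hff hx), right_zero hfe (corner_right hff hx),
      add_zero]

lemma jproj_row {e f x : R} (hee : e * e = e) (hes : star e = e) (hfe : f * e = 0)
    (hff : f * f = f) (hx : e * x * f = x) : jstar e x = x := by
  rw [jstar_def, hes, corner_left hee hx, right_zero hfe (corner_right hff hx), add_zero]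

lemma jproj_col {e f x : R} (hee : e * e = e) (hes : star e = e) (hef : e * f = 0)
    (hff : f * f = f) (hx : f * x * e = x) : jstar e x = x := by
  rw [jstar_def, hes, left_zero hef (corner_left hff hx), corner_right hee hx, zero_add]

end RingAux
section CStarAux

variable {𝔄 𝔄' : Type*} [CStarAlgebra 𝔄] [CStarAlgebra 𝔄']

lemma nat_smul_cancel {m : ℕ} (hm : m ≠ 0) {x y : 𝔄} (h : m • x = m • y) : x = y := by
  have h2 : ((m : ℂ)) • x = ((m : ℂ)) • y := by
    rw [Nat.cast_smul_eq_nsmul, Nat.cast_smul_eq_nsmul]; exact h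
  have hc : (m : ℂ) ≠ 0 := Nat.cast_ne_zero.mpr hm
  calc x = (m : ℂ)⁻¹ • ((m : ℂ) • x) := by rw [smul_smul, inv_mul_cancel₀ hc, one_smul]
    _ = (m : ℂ)⁻¹ • ((m : ℂ) • y) := by rw [h2]
    _ = y := by rw [smul_smul, inv_mul_cancel₀ hc, one_smul]

lemma half {x y : 𝔄} (h : x + x = y + y) : x = y := by
  refine nat_smul_cancel (two_ne_zero) (x := x) (y := y) ?_
  rw [two_smul, two_smul]; exact h

lemma half0 {x : 𝔄} (h : x + x = 0) : x = 0 := by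
  refine half (y := 0) ?_
  rw [add_zero]; exact h

lemma idem_zero {x : 𝔄} (h : x + x = x) : x = 0 := by
  have h2 : x + x = x + 0 := by rw [add_zero]; exact h
  exact add_left_cancel h2

structure Hyp (φ : 𝔄 → 𝔄') (k : ℕ) (p q : 𝔄) : Prop where
  hM : ∀ X Y : 𝔄, φ ((2^k : ℕ) • jstar X Y) = (2^k : ℕ) • jstar (φ X) (φ Y)
  inj : Function.Injective φ
  surj : Function.Surjective φ
  h0 : φ 0 = 0
  hpp : p * p = p
  hps : star p = p
  hqq : q * q = q
  hqs : star q = q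
  hpq : p * q = 0
  hqp : q * p = 0
  hpq1 : p + q = 1

variable {φ : 𝔄 → 𝔄'} {k : ℕ} {p q : 𝔄}

lemma Hyp.swap (H : Hyp φ k p q) : Hyp φ k q p :=
  ⟨H.hM, H.inj, H.surj, H.h0, H.hqq, H.hqs, H.hpp, H.hps, H.hqp, H.hpq,
    by rw [add_comm]; exact H.hpq1⟩

lemma Hyp.pcancel (H : Hyp φ k p q) {x y : 𝔄}
    (h : φ ((2^k : ℕ) • x) = φ ((2^k : ℕ) • y)) : x = y :=
  nat_smul_cancel (pow_ne_zero k two_ne_zero) (H.inj h)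

lemma Hyp.splitR (H : Hyp φ k p q) {T X Y : 𝔄} (hT : φ T = φ X + φ Y) (W : 𝔄) :
    φ ((2^k : ℕ) • jstar W T) = φ ((2^k : ℕ) • jstar W X) + φ ((2^k : ℕ) • jstar W Y) := by
  rw [H.hM, hT, jstar_add_right, smul_add, ← H.hM, ← H.hM]

lemma Hyp.splitL (H : Hyp φ k p q) {T X Y : 𝔄} (hT : φ T = φ X + φ Y) (W : 𝔄) :
    φ ((2^k : ℕ) • jstar T W) = φ ((2^k : ℕ) • jstar X W) + φ ((2^k : ℕ) • jstar Y W) := by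
  rw [H.hM, hT, jstar_add_left, smul_add, ← H.hM, ← H.hM]

lemma Hyp.splitR3 (H : Hyp φ k p q) {T X Y Z : 𝔄} (hT : φ T = φ X + φ Y + φ Z) (W : 𝔄) :
    φ ((2^k : ℕ) • jstar W T) =
      φ ((2^k : ℕ) • jstar W X) + φ ((2^k : ℕ) • jstar W Y) + φ ((2^k : ℕ) • jstar W Z) := by
  rw [H.hM, hT, jstar_add_right, jstar_add_right, smul_add, smul_add, ← H.hM, ← H.hM, ← H.hM]

lemma Hyp.splitL3 (H : Hyp φ k p q) {T X Y Z : 𝔄} (hT : φ T = φ X + φ Y + φ Z) (W : 𝔄) :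
    φ ((2^k : ℕ) • jstar T W) =
      φ ((2^k : ℕ) • jstar X W) + φ ((2^k : ℕ) • jstar Y W) + φ ((2^k : ℕ) • jstar Z W) := by
  rw [H.hM, hT, jstar_add_left, jstar_add_left, smul_add, smul_add, ← H.hM, ← H.hM, ← H.hM]

lemma Hyp.splitR4 (H : Hyp φ k p q) {T X Y Z W' : 𝔄}
    (hT : φ T = φ X + φ Y + φ Z + φ W') (W : 𝔄) :
    φ ((2^k : ℕ) • jstar W T) =
      φ ((2^k : ℕ) • jstar W X) + φ ((2^k : ℕ) • jstar W Y) + φ ((2^k : ℕ) • jstar W Z) +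
        φ ((2^k : ℕ) • jstar W W') := by
  rw [H.hM, hT, jstar_add_right, jstar_add_right, jstar_add_right, smul_add, smul_add, smul_add,
    ← H.hM, ← H.hM, ← H.hM, ← H.hM]

/-- Claim 1 : additivity on `𝔄₁₂ + 𝔄₂₁`. -/
lemma claim1 (H : Hyp φ k p q) {a b : 𝔄} (ha : p * a * q = a) (hb : q * b * p = b) :
    φ (a + b) = φ a + φ b := by
  obtain ⟨T, hT⟩ := H.surj (φ a + φ b)
  have hsa21 : q * star a * p = star a := star_corner H.hps H.hqs ha
  have hsb12 : p * star b * q = star b := star_corner H.hqs H.hps hb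
  have jpa : jstar p a = a := jproj_row H.hpp H.hps H.hqp H.hqq ha
  have jqa : jstar q a = a := jproj_col H.hqq H.hqs H.hqp H.hpp ha
  have jpb : jstar p b = b := jproj_col H.hpp H.hps H.hpq H.hqq hb
  have jqb : jstar q b = b := jproj_row H.hqq H.hqs H.hpq H.hpp hb
  have e1 : φ ((2^k : ℕ) • jstar p T) = φ ((2^k : ℕ) • a) + φ ((2^k : ℕ) • b) := by
    rw [H.splitR hT p, jpa, jpb]
  have e2 : φ ((2^k : ℕ) • jstar q T) = φ ((2^k : ℕ) • a) + φ ((2^k : ℕ) • b) := by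
    rw [H.splitR hT q, jqa, jqb]
  have e3 : jstar p T = jstar q T := H.pcancel (e1.trans e2.symm)
  have e3' : p * T + T * p = q * T + T * q := by
    have h1 : jstar p T = p * T + T * p := by rw [jstar_def, H.hps]
    have h2 : jstar q T = q * T + T * q := by rw [jstar_def, H.hqs]
    rw [← h1, ← h2, e3]
  have s1 : (p * T + T * p) + (q * T + T * q) = T + T := by
    have h5 : (p * T + T * p) + (q * T + T * q) = (p + q) * T + T * (p + q) := by
      simp only [add_mul, mul_add]; abel
    rw [h5, H.hpq1, one_mul, mul_one]
  have e4 : p * T + T * p = T := by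
    apply half
    calc (p * T + T * p) + (p * T + T * p) = (p * T + T * p) + (q * T + T * q) := by rw [e3']
      _ = T + T := s1
  have e5 : q * T + T * q = T := by rw [← e3']; exact e4
  obtain ⟨-, -, cpp⟩ := comps H.hpp H.hqp H.hpq e4
  have hpTp : p * T * p = 0 := idem_zero cpp
  obtain ⟨-, -, cqq⟩ := comps H.hqq H.hpq H.hqp e5
  have hqTq : q * T * q = 0 := idem_zero cqq
  have hdec := decomp H.hpq1 T
  rw [hpTp, hqTq, zero_add, add_zero] at hdec
  -- hdec : T = p*T*q + q*T*p
  have jTq : φ ((2^k : ℕ) • jstar T q) = φ ((2^k : ℕ) • (a + star a)) := by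
    have h6 : jstar a q = a + star a := by
      rw [jstar_def, corner_right H.hqq ha, corner_left H.hqq hsa21]
    have h7 : jstar b q = 0 := by
      rw [jstar_def, right_zero H.hpq (corner_right H.hpp hb),
        left_zero H.hqp (corner_left H.hpp hsb12), add_zero]
    rw [H.splitL hT q, h6, h7, smul_zero, H.h0, add_zero]
  have h9 := H.pcancel jTq
  rw [jstar_def] at h9
  have hTq2 : T * q = p * T * q := by
    conv_lhs => rw [hdec]
    rw [add_mul, mul_assoc (p*T) q q, H.hqq, mul_assoc (q*T) p q, H.hpq, mul_zero, add_zero]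
  have hqsT : q * star T = star (p * T * q) := by rw [← hTq2, star_mul, H.hqs]
  rw [hTq2, hqsT] at h9
  have E := congrArg (fun w => p * w * q) h9
  rw [proj_add, proj_add, corner_idem H.hpp H.hqq, ha,
    proj_eval_zero_left H.hpq
      (corner_left H.hqq (star_corner H.hps H.hqs (corner_idem H.hpp H.hqq T))) q,
    proj_eval_zero_left H.hpq (corner_left H.hqq hsa21) q, add_zero, add_zero] at E
  -- E : p * T * q = a
  have jTp : φ ((2^k : ℕ) • jstar T p) = φ ((2^k : ℕ) • (b + star b)) := by
    have h6 : jstar a p = 0 := by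
      rw [jstar_def, right_zero H.hqp (corner_right H.hqq ha),
        left_zero H.hpq (corner_left H.hqq hsa21), add_zero]
    have h7 : jstar b p = b + star b := by
      rw [jstar_def, corner_right H.hpp hb, corner_left H.hpp hsb12]
    rw [H.splitL hT p, h6, h7, smul_zero, H.h0, zero_add]
  have h10 := H.pcancel jTp
  rw [jstar_def] at h10
  have hTp2 : T * p = q * T * p := by
    conv_lhs => rw [hdec]
    rw [add_mul, mul_assoc (p*T) q p, H.hqp, mul_zero, mul_assoc (q*T) p p, H.hpp, zero_add]
  have hpsT : p * star T = star (q * T * p) := by rw [← hTp2, star_mul, H.hps]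
  rw [hTp2, hpsT] at h10
  have E2 := congrArg (fun w => q * w * p) h10
  rw [proj_add, proj_add, corner_idem H.hqq H.hpp, hb,
    proj_eval_zero_left H.hqp
      (corner_left H.hpp (star_corner H.hqs H.hps (corner_idem H.hqq H.hpp T))) p,
    proj_eval_zero_left H.hqp (corner_left H.hpp hsb12) p, add_zero, add_zero] at E2
  -- E2 : q * T * p = b
  have hfin : T = a + b := by rw [hdec, E, E2]
  rw [hfin] at hT
  exact hT

/-- Claim 2 : additivity on `𝔄₁₁ + 𝔄₂₂`. -/
lemma claim2 (H : Hyp φ k p q) {a d : 𝔄} (ha : p * a * p = a) (hd : q * d * q = d) :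
    φ (a + d) = φ a + φ d := by
  obtain ⟨T, hT⟩ := H.surj (φ a + φ d)
  have e1 : φ ((2^k : ℕ) • jstar p T) = φ ((2^k : ℕ) • (a + a)) := by
    rw [H.splitR hT p, jproj_same H.hpp H.hps ha, jproj_opp H.hps H.hpq H.hqp H.hqq hd,
      smul_zero, H.h0, add_zero]
  have e2 : φ ((2^k : ℕ) • jstar q T) = φ ((2^k : ℕ) • (d + d)) := by
    rw [H.splitR hT q, jproj_opp H.hqs H.hqp H.hpq H.hpp ha, jproj_same H.hqq H.hqs hd,
      smul_zero, H.h0, zero_add]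
  have f1 : p * T + T * p = a + a := by
    have := H.pcancel e1; rw [jstar_def, H.hps] at this; exact this
  have f2 : q * T + T * q = d + d := by
    have := H.pcancel e2; rw [jstar_def, H.hqs] at this; exact this
  obtain ⟨g1, g2, g3⟩ := comps H.hpp H.hqp H.hpq f1
  -- g1 : q*T*p = q*(a+a)*p ; g2 : p*T*q = p*(a+a)*q ; g3 : p*T*p + p*T*p = p*(a+a)*p
  rw [proj_add, proj_eval_zero_left H.hqp (corner_left H.hpp ha) p, add_zero] at g1
  rw [proj_add, proj_eval_zero_right H.hpq (corner_right H.hpp ha) p, add_zero] at g2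
  rw [proj_add, ha] at g3
  have g3' : p * T * p = a := half g3
  obtain ⟨-, -, g6⟩ := comps H.hqq H.hpq H.hqp f2
  rw [proj_add, hd] at g6
  have g6' : q * T * q = d := half g6
  have hdec := decomp H.hpq1 T
  rw [g1, g2, g3', g6', add_zero, zero_add] at hdec
  rw [hdec] at hT
  exact hT

/-- Structure lemma: preimage of `φ a₁₁ + φ b₁₂`. -/
lemma SL (H : Hyp φ k p q) {a b S : 𝔄} (ha : p * a * p = a) (hb : p * b * q = b)
    (hS : φ S = φ a + φ b) : p * S * q = b ∧ q * S * p = 0 ∧ q * S * q = 0 := by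
  have e1 : φ ((2^k : ℕ) • jstar q S) = φ ((2^k : ℕ) • b) := by
    rw [H.splitR hS q, jproj_opp H.hqs H.hqp H.hpq H.hpp ha,
      jproj_col H.hqq H.hqs H.hqp H.hpp hb, smul_zero, H.h0, zero_add]
  have f1 : q * S + S * q = b := by
    have := H.pcancel e1; rw [jstar_def, H.hqs] at this; exact this
  obtain ⟨g1, g2, g3⟩ := comps H.hqq H.hpq H.hqp f1
  rw [hb] at g1
  rw [proj_eval_zero_left H.hqp (corner_left H.hpp hb) p] at g2
  rw [proj_eval_zero_left H.hqp (corner_left H.hpp hb) q] at g3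
  exact ⟨g1, g2, half0 g3⟩

end CStarAux
section CStarAux2

variable {𝔄 𝔄' : Type*} [CStarAlgebra 𝔄] [CStarAlgebra 𝔄']
variable {φ : 𝔄 → 𝔄'} {k : ℕ} {p q : 𝔄}

/-- Claim 3L : additivity on `𝔄₁₁ + 𝔄₁₂`. -/
lemma claim3L (H : Hyp φ k p q) (spadeQ : ∀ X : 𝔄, (∀ A : 𝔄, X * A * q = 0) → X = 0)
    {a b : 𝔄} (ha : p * a * p = a) (hb : p * b * q = b) : φ (a + b) = φ a + φ b := by
  obtain ⟨T, hT⟩ := H.surj (φ a + φ b)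
  obtain ⟨h12, h21, h22⟩ := SL H ha hb hT
  have hdec := decomp H.hpq1 T
  rw [h12, h21, h22, add_zero, add_zero] at hdec
  -- hdec : T = p*T*p + b
  have htc : p * (p * T * p) * p = p * T * p := corner_idem H.hpp H.hpp T
  have hstc : p * star (p * T * p) * p = star (p * T * p) := star_corner H.hps H.hps htc
  have key : ∀ C : 𝔄, (p * T * p - a) * C * q = 0 := by
    intro C
    have hDc : p * (p * C * q) * q = p * C * q := corner_idem H.hpp H.hqq C
    have hDl : p * (p * C * q) = p * C * q := corner_left H.hpp hDc
    have hDr : (p * C * q) * q = p * C * q := corner_right H.hqq hDc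
    have hsb21 : q * star b * p = star b := star_corner H.hps H.hqs hb
    have jT : jstar T (p * C * q) = (p * T * p) * (p * C * q) + (p * C * q) * star b := by
      rw [jstar_def]
      conv_lhs => rw [hdec]
      rw [star_add, add_mul, mul_add]
      rw [mzh (corner_right H.hqq hb) hDl H.hqp]
      rw [mzh hDr (corner_left H.hpp hstc) H.hqp]
      rw [add_zero, zero_add]
    have ja : jstar a (p * C * q) = a * (p * C * q) := by
      rw [jstar_def, mzh hDr (corner_left H.hpp (star_corner H.hps H.hps ha)) H.hqp, add_zero]
    have jb : jstar b (p * C * q) = (p * C * q) * star b := by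
      rw [jstar_def, mzh (corner_right H.hqq hb) hDl H.hqp, zero_add]
    have e1 := H.splitL hT (p * C * q)
    rw [jT, ja, jb] at e1
    have ha' : p * ((2^k : ℕ) • ((p * C * q) * star b)) * p =
        (2^k : ℕ) • ((p * C * q) * star b) := by
      rw [proj_smul, corner_mul hDl (corner_right H.hpp hsb21)]
    have hb' : p * ((2^k : ℕ) • (a * (p * C * q))) * q = (2^k : ℕ) • (a * (p * C * q)) := by
      rw [proj_smul, corner_mul (corner_left H.hpp ha) hDr]
    have hS' : φ ((2^k : ℕ) • ((p * T * p) * (p * C * q) + (p * C * q) * star b)) =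
        φ ((2^k : ℕ) • ((p * C * q) * star b)) + φ ((2^k : ℕ) • (a * (p * C * q))) := by
      rw [e1, add_comm]
    obtain ⟨g12, -, -⟩ := SL H ha' hb' hS'
    have lhs : p * ((2^k : ℕ) • ((p * T * p) * (p * C * q) + (p * C * q) * star b)) * q =
        (2^k : ℕ) • ((p * T * p) * (p * C * q)) := by
      rw [proj_smul, proj_add, corner_mul (corner_left H.hpp htc) hDr,
        proj_eval_zero_right H.hpq
          (corner_right H.hpp (corner_mul hDl (corner_right H.hpp hsb21))) p, add_zero]
    rw [lhs] at g12
    have htD : (p * T * p) * (p * C * q) = a * (p * C * q) :=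
      nat_smul_cancel (pow_ne_zero k two_ne_zero) g12
    have hXp : (p * T * p - a) * p = p * T * p - a := by
      rw [sub_mul, corner_right H.hpp htc, corner_right H.hpp ha]
    have h2 : (p * T * p - a) * (p * C * q) = 0 := by rw [sub_mul, htD, sub_self]
    rw [← mul_assoc, ← mul_assoc, hXp] at h2
    exact h2
  have hta : p * T * p = a := sub_eq_zero.mp (spadeQ _ key)
  rw [hdec, hta] at hT
  exact hT

/-- Claim 3R : additivity on `𝔄₁₁ + 𝔄₂₁`. -/
lemma claim3R (H : Hyp φ k p q) (spadeQ : ∀ X : 𝔄, (∀ A : 𝔄, X * A * q = 0) → X = 0)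
    {a b : 𝔄} (ha : p * a * p = a) (hb : q * b * p = b) : φ (a + b) = φ a + φ b := by
  obtain ⟨T, hT⟩ := H.surj (φ a + φ b)
  have e1 : φ ((2^k : ℕ) • jstar q T) = φ ((2^k : ℕ) • b) := by
    rw [H.splitR hT q, jproj_opp H.hqs H.hqp H.hpq H.hpp ha,
      jproj_row H.hqq H.hqs H.hpq H.hpp hb, smul_zero, H.h0, zero_add]
  have f1 : q * T + T * q = b := by
    have := H.pcancel e1; rw [jstar_def, H.hqs] at this; exact this
  obtain ⟨g1, g2, g3⟩ := comps H.hqq H.hpq H.hqp f1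
  rw [proj_eval_zero_right H.hpq (corner_right H.hpp hb) p] at g1
  rw [hb] at g2
  rw [proj_eval_zero_right H.hpq (corner_right H.hpp hb) q] at g3
  have g3' : q * T * q = 0 := half0 g3
  have hdec := decomp H.hpq1 T
  rw [g1, g2, g3', add_zero, add_zero] at hdec
  -- hdec : T = p*T*p + b
  have htc : p * (p * T * p) * p = p * T * p := corner_idem H.hpp H.hpp T
  have hstc : p * star (p * T * p) * p = star (p * T * p) := star_corner H.hps H.hps htc
  have key : ∀ C : 𝔄, (p * T * p - a) * C * q = 0 := by
    intro C
    have hEc : q * (q * star C * p) * p = q * star C * p := corner_idem H.hqq H.hpp (star C)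
    have hEl : q * (q * star C * p) = q * star C * p := corner_left H.hqq hEc
    have hsb12 : p * star b * q = star b := star_corner H.hqs H.hps hb
    have jT : jstar T (q * star C * p) =
        (q * star C * p) * star (p * T * p) + (q * star C * p) * star b := by
      rw [jstar_def]
      conv_lhs => rw [hdec]
      rw [star_add, add_mul, mul_add]
      rw [mzh (corner_right H.hpp htc) hEl H.hpq]
      rw [mzh (corner_right H.hpp hb) hEl H.hpq]
      rw [add_zero, zero_add]
    have ja : jstar a (q * star C * p) = (q * star C * p) * star a := by
      rw [jstar_def, mzh (corner_right H.hpp ha) hEl H.hpq, zero_add]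
    have jb : jstar b (q * star C * p) = (q * star C * p) * star b := by
      rw [jstar_def, mzh (corner_right H.hpp hb) hEl H.hpq, zero_add]
    have e2 := H.splitL hT (q * star C * p)
    rw [jT, ja, jb] at e2
    have ha' : q * ((2^k : ℕ) • ((q * star C * p) * star b)) * q =
        (2^k : ℕ) • ((q * star C * p) * star b) := by
      rw [proj_smul, corner_mul hEl (corner_right H.hqq hsb12)]
    have hb' : q * ((2^k : ℕ) • ((q * star C * p) * star a)) * p =
        (2^k : ℕ) • ((q * star C * p) * star a) := by
      rw [proj_smul, corner_mul hEl (corner_right H.hpp (star_corner H.hps H.hps ha))]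
    have hS' : φ ((2^k : ℕ) • ((q * star C * p) * star (p * T * p) + (q * star C * p) * star b)) =
        φ ((2^k : ℕ) • ((q * star C * p) * star b)) +
          φ ((2^k : ℕ) • ((q * star C * p) * star a)) := by
      rw [e2, add_comm]
    obtain ⟨g12, -, -⟩ := SL H.swap ha' hb' hS'
    have lhs : q * ((2^k : ℕ) • ((q * star C * p) * star (p * T * p) +
        (q * star C * p) * star b)) * p = (2^k : ℕ) • ((q * star C * p) * star (p * T * p)) := by
      rw [proj_smul, proj_add, corner_mul hEl (corner_right H.hpp hstc),
        proj_eval_zero_right H.hqp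
          (corner_right H.hqq (corner_mul hEl (corner_right H.hqq hsb12))) q, add_zero]
    rw [lhs] at g12
    have hEt : (q * star C * p) * star (p * T * p) = (q * star C * p) * star a :=
      nat_smul_cancel (pow_ne_zero k two_ne_zero) g12
    have h3 : (q * star C * p) * star (p * T * p - a) = 0 := by
      rw [star_sub, mul_sub, hEt, sub_self]
    have h4 := congrArg star h3
    rw [star_mul, star_star, star_zero, star_mul, star_mul, H.hps, H.hqs, star_star] at h4
    -- h4 : (p*T*p - a) * (p * (C * q)) = 0
    have hXp : (p * T * p - a) * p = p * T * p - a := by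
      rw [sub_mul, corner_right H.hpp htc, corner_right H.hpp ha]
    rw [← mul_assoc, hXp, ← mul_assoc] at h4
    exact h4
  have hta : p * T * p = a := sub_eq_zero.mp (spadeQ _ key)
  rw [hdec, hta] at hT
  exact hT

/-- Structure lemma for triples `φ b₁₂ + φ a₁₁ + φ e₂₂`. -/
lemma SL3 (H : Hyp φ k p q) (spadeP : ∀ X : 𝔄, (∀ A : 𝔄, X * A * p = 0) → X = 0)
    {b a e S : 𝔄} (hb : p * b * q = b) (ha : p * a * p = a) (he : q * e * q = e)
    (hS : φ S = φ b + φ a + φ e) : p * S * q = b := by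
  have e1 : φ ((2^k : ℕ) • jstar q S) = φ ((2^k : ℕ) • (b + (e + e))) := by
    rw [H.splitR3 hS q, jproj_col H.hqq H.hqs H.hqp H.hpp hb,
      jproj_opp H.hqs H.hqp H.hpq H.hpp ha, jproj_same H.hqq H.hqs he,
      smul_zero, H.h0, add_zero]
    have ha' : q * ((2^k : ℕ) • (e + e)) * q = (2^k : ℕ) • (e + e) := by
      rw [proj_smul, proj_add, he]
    have hb' : p * ((2^k : ℕ) • b) * q = (2^k : ℕ) • b := by rw [proj_smul, hb]
    have hmerge := claim3R H.swap spadeP ha' hb'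
    conv_rhs => rw [smul_add, add_comm ((2^k : ℕ) • b)]
    rw [hmerge]
    exact add_comm _ _
  have f1 : q * S + S * q = b + (e + e) := by
    have := H.pcancel e1; rw [jstar_def, H.hqs] at this; exact this
  obtain ⟨g1, -, -⟩ := comps H.hqq H.hpq H.hqp f1
  rw [proj_add, hb, proj_add, proj_eval_zero_left H.hpq (corner_left H.hqq he) q,
    add_zero, add_zero] at g1
  exact g1

end CStarAux2
section CStarAux3

variable {𝔄 𝔄' : Type*} [CStarAlgebra 𝔄] [CStarAlgebra 𝔄']
variable {φ : 𝔄 → 𝔄'} {k : ℕ} {p q : 𝔄}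

/-- Claim 5a : additivity on `𝔄₁₁ + 𝔄₁₂ + 𝔄₂₁`. -/
lemma claim5a (H : Hyp φ k p q) (spadeP : ∀ X : 𝔄, (∀ A : 𝔄, X * A * p = 0) → X = 0)
    (spadeQ : ∀ X : 𝔄, (∀ A : 𝔄, X * A * q = 0) → X = 0)
    {x y z : 𝔄} (hx : p * x * p = x) (hy : p * y * q = y) (hz : q * z * p = z) :
    φ (x + y + z) = φ x + φ y + φ z := by
  obtain ⟨T, hT⟩ := H.surj (φ x + φ y + φ z)
  have e1 : φ ((2^k : ℕ) • jstar q T) = φ ((2^k : ℕ) • (y + z)) := by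
    rw [H.splitR3 hT q, jproj_opp H.hqs H.hqp H.hpq H.hpp hx,
      jproj_col H.hqq H.hqs H.hqp H.hpp hy, jproj_row H.hqq H.hqs H.hpq H.hpp hz,
      smul_zero, H.h0, zero_add]
    have hc := claim1 H (show p * ((2^k : ℕ) • y) * q = (2^k : ℕ) • y from by
        rw [proj_smul, hy])
      (show q * ((2^k : ℕ) • z) * p = (2^k : ℕ) • z from by rw [proj_smul, hz])
    conv_rhs => rw [smul_add]
    rw [hc]
  have f1 : q * T + T * q = y + z := by
    have := H.pcancel e1; rw [jstar_def, H.hqs] at this; exact this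
  obtain ⟨g1, g2, g3⟩ := comps H.hqq H.hpq H.hqp f1
  rw [proj_add, hy, proj_eval_zero_left H.hpq (corner_left H.hqq hz) q, add_zero] at g1
  rw [proj_add, proj_eval_zero_left H.hqp (corner_left H.hpp hy) p, hz, zero_add] at g2
  rw [proj_add, proj_eval_zero_left H.hqp (corner_left H.hpp hy) q,
    proj_eval_zero_right H.hpq (corner_right H.hpp hz) q, add_zero] at g3
  have g3' : q * T * q = 0 := half0 g3
  have hdec := decomp H.hpq1 T
  rw [g1, g2, g3', add_zero] at hdec
  -- hdec : T = p*T*p + y + z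
  have htc : p * (p * T * p) * p = p * T * p := corner_idem H.hpp H.hpp T
  have hstc : p * star (p * T * p) * p = star (p * T * p) := star_corner H.hps H.hps htc
  have key : ∀ C : 𝔄, (p * T * p - x) * C * q = 0 := by
    intro C
    have hDc : p * (p * C * q) * q = p * C * q := corner_idem H.hpp H.hqq C
    have hDl : p * (p * C * q) = p * C * q := corner_left H.hpp hDc
    have hDr : (p * C * q) * q = p * C * q := corner_right H.hqq hDc
    have hsy : q * star y * p = star y := star_corner H.hps H.hqs hy
    have hsz : p * star z * q = star z := star_corner H.hqs H.hps hz
    have jT : jstar T (p * C * q) =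
        ((p * T * p) * (p * C * q) + z * (p * C * q)) + (p * C * q) * star y := by
      rw [jstar_def]
      conv_lhs => rw [hdec]
      rw [star_add, star_add, add_mul, add_mul, mul_add, mul_add]
      rw [mzh (corner_right H.hqq hy) hDl H.hqp]
      rw [mzh hDr (corner_left H.hpp hstc) H.hqp]
      rw [mzh hDr (corner_left H.hpp hsz) H.hqp]
      abel
    have jx : jstar x (p * C * q) = x * (p * C * q) := by
      rw [jstar_def, mzh hDr (corner_left H.hpp (star_corner H.hps H.hps hx)) H.hqp, add_zero]
    have jy : jstar y (p * C * q) = (p * C * q) * star y := by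
      rw [jstar_def, mzh (corner_right H.hqq hy) hDl H.hqp, zero_add]
    have jz : jstar z (p * C * q) = z * (p * C * q) := by
      rw [jstar_def, mzh hDr (corner_left H.hpp hsz) H.hqp, add_zero]
    have e2 := H.splitL3 hT (p * C * q)
    rw [jT, jx, jy, jz] at e2
    have hb' : p * ((2^k : ℕ) • (x * (p * C * q))) * q = (2^k : ℕ) • (x * (p * C * q)) := by
      rw [proj_smul, corner_mul (corner_left H.hpp hx) hDr]
    have ha' : p * ((2^k : ℕ) • ((p * C * q) * star y)) * p =
        (2^k : ℕ) • ((p * C * q) * star y) := by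
      rw [proj_smul, corner_mul hDl (corner_right H.hpp hsy)]
    have he' : q * ((2^k : ℕ) • (z * (p * C * q))) * q = (2^k : ℕ) • (z * (p * C * q)) := by
      rw [proj_smul, corner_mul (corner_left H.hqq hz) hDr]
    have g := SL3 H spadeP hb' ha' he' e2
    have lhs : p * ((2^k : ℕ) • (((p * T * p) * (p * C * q) + z * (p * C * q)) +
        (p * C * q) * star y)) * q = (2^k : ℕ) • ((p * T * p) * (p * C * q)) := by
      rw [proj_smul, proj_add, proj_add, corner_mul (corner_left H.hpp htc) hDr,
        proj_eval_zero_left H.hpq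
          (corner_left H.hqq (corner_mul (corner_left H.hqq hz) hDr)) q,
        proj_eval_zero_right H.hpq
          (corner_right H.hpp (corner_mul hDl (corner_right H.hpp hsy))) p,
        add_zero, add_zero]
    rw [lhs] at g
    have htD : (p * T * p) * (p * C * q) = x * (p * C * q) :=
      nat_smul_cancel (pow_ne_zero k two_ne_zero) g
    have hXp : (p * T * p - x) * p = p * T * p - x := by
      rw [sub_mul, corner_right H.hpp htc, corner_right H.hpp hx]
    have h2 : (p * T * p - x) * (p * C * q) = 0 := by rw [sub_mul, htD, sub_self]
    rw [← mul_assoc, ← mul_assoc, hXp] at h2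
    exact h2
  have hta : p * T * p = x := sub_eq_zero.mp (spadeQ _ key)
  rw [hdec, hta] at hT
  exact hT

/-- Claim 5 : additivity on all four Peirce corners. -/
lemma claim5 (H : Hyp φ k p q) (spadeP : ∀ X : 𝔄, (∀ A : 𝔄, X * A * p = 0) → X = 0)
    (spadeQ : ∀ X : 𝔄, (∀ A : 𝔄, X * A * q = 0) → X = 0)
    {w x y z : 𝔄} (hw : p * w * p = w) (hx : p * x * q = x) (hy : q * y * p = y)
    (hz : q * z * q = z) :
    φ (w + x + y + z) = φ w + φ x + φ y + φ z := by
  obtain ⟨T, hT⟩ := H.surj (φ w + φ x + φ y + φ z)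
  have e1 : φ ((2^k : ℕ) • jstar p T) = φ ((2^k : ℕ) • (w + w + x + y)) := by
    rw [H.splitR4 hT p, jproj_same H.hpp H.hps hw, jproj_row H.hpp H.hps H.hqp H.hqq hx,
      jproj_col H.hpp H.hps H.hpq H.hqq hy, jproj_opp H.hps H.hpq H.hqp H.hqq hz,
      smul_zero, H.h0, add_zero]
    have hc := claim5a H spadeP spadeQ
      (show p * ((2^k : ℕ) • (w + w)) * p = (2^k : ℕ) • (w + w) from by
        rw [proj_smul, proj_add, hw])
      (show p * ((2^k : ℕ) • x) * q = (2^k : ℕ) • x from by rw [proj_smul, hx])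
      (show q * ((2^k : ℕ) • y) * p = (2^k : ℕ) • y from by rw [proj_smul, hy])
    have harg : (2^k : ℕ) • (w + w + x + y) =
        (2^k : ℕ) • (w + w) + (2^k : ℕ) • x + (2^k : ℕ) • y := by
      rw [smul_add, smul_add]
    conv_rhs => rw [harg]
    rw [hc]
  have f1 : p * T + T * p = w + w + x + y := by
    have := H.pcancel e1; rw [jstar_def, H.hps] at this; exact this
  obtain ⟨g1, g2, g3⟩ := comps H.hpp H.hqp H.hpq f1
  -- g1 : q*T*p = q*(w+w+x+y)*p ; g2 : p*T*q = ... ; g3 : p*T*p + p*T*p = ...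
  rw [proj_add, proj_add, proj_add,
    proj_eval_zero_left H.hqp (corner_left H.hpp hw) p,
    proj_eval_zero_left H.hqp (corner_left H.hpp hx) p, hy,
    add_zero, zero_add, zero_add] at g1
  rw [proj_add, proj_add, proj_add,
    proj_eval_zero_right H.hpq (corner_right H.hpp hw) p, hx,
    proj_eval_zero_left H.hpq (corner_left H.hqq hy) q,
    add_zero, add_zero, zero_add] at g2
  rw [proj_add, proj_add, proj_add, hw,
    proj_eval_zero_right H.hqp (corner_right H.hqq hx) p,
    proj_eval_zero_left H.hpq (corner_left H.hqq hy) p,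
    add_zero, add_zero] at g3
  have g3' : p * T * p = w := half g3
  have e2 : φ ((2^k : ℕ) • jstar q T) = φ ((2^k : ℕ) • (x + y + (z + z))) := by
    rw [H.splitR4 hT q, jproj_opp H.hqs H.hqp H.hpq H.hpp hw,
      jproj_col H.hqq H.hqs H.hqp H.hpp hx, jproj_row H.hqq H.hqs H.hpq H.hpp hy,
      jproj_same H.hqq H.hqs hz, smul_zero, H.h0, zero_add]
    have hc2 := claim5a H.swap spadeQ spadeP
      (show q * ((2^k : ℕ) • (z + z)) * q = (2^k : ℕ) • (z + z) from by
        rw [proj_smul, proj_add, hz])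
      (show q * ((2^k : ℕ) • y) * p = (2^k : ℕ) • y from by rw [proj_smul, hy])
      (show p * ((2^k : ℕ) • x) * q = (2^k : ℕ) • x from by rw [proj_smul, hx])
    have harg2 : (2^k : ℕ) • (x + y + (z + z)) =
        (2^k : ℕ) • (z + z) + (2^k : ℕ) • y + (2^k : ℕ) • x := by
      rw [smul_add, smul_add]; abel
    conv_rhs => rw [harg2]
    rw [hc2]
    abel
  have f2 : q * T + T * q = x + y + (z + z) := by
    have := H.pcancel e2; rw [jstar_def, H.hqs] at this; exact this
  obtain ⟨-, -, g6⟩ := comps H.hqq H.hpq H.hqp f2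
  rw [proj_add, proj_add,
    proj_eval_zero_left H.hqp (corner_left H.hpp hx) q,
    proj_eval_zero_right H.hpq (corner_right H.hpp hy) q,
    proj_add, hz, add_zero, zero_add] at g6
  have g6' : q * T * q = z := half g6
  have hdec := decomp H.hpq1 T
  rw [g1, g2, g3', g6'] at hdec
  have hTfin : T = w + x + y + z := by rw [hdec]; abel
  rw [hTfin] at hT
  exact hT

/-- The crucial merge: `φ (2^k • (A*D + B*D)) = φ (2^k•(A*D)) + φ (2^k•(B*D))`. -/
lemma merge12 (H : Hyp φ k p q) (spadeP : ∀ X : 𝔄, (∀ A : 𝔄, X * A * p = 0) → X = 0)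
    (spadeQ : ∀ X : 𝔄, (∀ A : 𝔄, X * A * q = 0) → X = 0)
    {A B D : 𝔄} (hA : p * A * p = A) (hB : p * B * p = B) (hD : p * D * q = D) :
    φ ((2^k : ℕ) • (A * D + B * D)) = φ ((2^k : ℕ) • (A * D)) + φ ((2^k : ℕ) • (B * D)) := by
  have hDs : q * star D * p = star D := star_corner H.hps H.hqs hD
  have hu : φ (A + star D) = φ A + φ (star D) := claim3R H spadeQ hA hDs
  have hv : φ (B + D) = φ B + φ D := claim3L H spadeQ hB hD
  have expand : φ ((2^k : ℕ) • jstar (A + star D) (B + D)) =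
      φ ((2^k : ℕ) • jstar A B) + φ ((2^k : ℕ) • jstar A D) +
        (φ ((2^k : ℕ) • jstar (star D) B) + φ ((2^k : ℕ) • jstar (star D) D)) := by
    rw [H.hM, hu, hv, jstar_add_left, jstar_add_right, jstar_add_right, smul_add, smul_add,
      smul_add, ← H.hM, ← H.hM, ← H.hM, ← H.hM]
  have hDA : D * star A = 0 :=
    mzh (corner_right H.hqq hD) (corner_left H.hpp (star_corner H.hps H.hps hA)) H.hqp
  have hDD : D * D = 0 := mzh (corner_right H.hqq hD) (corner_left H.hpp hD) H.hqp
  have jAD : jstar A D = A * D := by rw [jstar_def, hDA, add_zero]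
  have jDB : jstar (star D) B = star D * B + B * D := by rw [jstar_def, star_star]
  have jDD : jstar (star D) D = star D * D := by rw [jstar_def, star_star, hDD, add_zero]
  have jbig : jstar (A + star D) (B + D) =
      ((A * B + B * star A) + (A * D + B * D)) + (star D * B) + (star D * D) := by
    rw [jstar_def, star_add, star_star]
    simp only [add_mul, mul_add]
    rw [hDA, hDD]
    abel
  have hW : p * ((2^k : ℕ) • (A * B + B * star A)) * p = (2^k : ℕ) • (A * B + B * star A) := by
    rw [proj_smul, proj_add, corner_mul (corner_left H.hpp hA) (corner_right H.hpp hB),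
      corner_mul (corner_left H.hpp hB) (corner_right H.hpp (star_corner H.hps H.hps hA))]
  have hX : p * ((2^k : ℕ) • (A * D + B * D)) * q = (2^k : ℕ) • (A * D + B * D) := by
    rw [proj_smul, proj_add, corner_mul (corner_left H.hpp hA) (corner_right H.hqq hD),
      corner_mul (corner_left H.hpp hB) (corner_right H.hqq hD)]
  have hY : q * ((2^k : ℕ) • (star D * B)) * p = (2^k : ℕ) • (star D * B) := by
    rw [proj_smul, corner_mul (corner_left H.hqq hDs) (corner_right H.hpp hB)]
  have hZ : q * ((2^k : ℕ) • (star D * D)) * q = (2^k : ℕ) • (star D * D) := by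
    rw [proj_smul, corner_mul (corner_left H.hqq hDs) (corner_right H.hqq hD)]
  have hC5 := claim5 H spadeP spadeQ hW hX hY hZ
  have hC1 := claim1 H
    (show p * ((2^k : ℕ) • (B * D)) * q = (2^k : ℕ) • (B * D) from by
      rw [proj_smul, corner_mul (corner_left H.hpp hB) (corner_right H.hqq hD)])
    (show q * ((2^k : ℕ) • (star D * B)) * p = (2^k : ℕ) • (star D * B) from by
      rw [proj_smul, corner_mul (corner_left H.hqq hDs) (corner_right H.hpp hB)])
  -- rewrite the big jstar two ways
  have jAB : jstar A B = A * B + B * star A := rfl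
  have E1 := expand
  rw [jAB, jAD, jDB, jDD, jbig] at E1
  -- LHS : φ (2^k • (((AB + BA*) + (AD + BD)) + D*B + D*D))
  have hsplit : ((2^k : ℕ) : ℕ) • (((A * B + B * star A) + (A * D + B * D)) + (star D * B) +
      (star D * D)) = (2^k : ℕ) • (A * B + B * star A) + (2^k : ℕ) • (A * D + B * D) +
      (2^k : ℕ) • (star D * B) + (2^k : ℕ) • (star D * D) := by
    rw [smul_add, smul_add, smul_add]
  rw [hsplit, hC5] at E1
  -- now massage the jDB term on the RHS of E1
  have hsw : (2^k : ℕ) • (star D * B + B * D) = (2^k : ℕ) • (B * D) + (2^k : ℕ) • (star D * B) := by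
    rw [smul_add]; exact add_comm _ _
  rw [hsw, hC1] at E1
  -- E1 : a + b + c + d = a + u + (v + c + d)-shaped; extract b = u + v
  have hfin : φ ((2^k : ℕ) • (A * D + B * D)) =
      φ ((2^k : ℕ) • (A * D)) + φ ((2^k : ℕ) • (B * D)) := by
    have h2 : φ ((2^k : ℕ) • (A * D + B * D)) -
        (φ ((2^k : ℕ) • (A * D)) + φ ((2^k : ℕ) • (B * D))) =
        (φ ((2^k : ℕ) • (A * B + B * star A)) + φ ((2^k : ℕ) • (A * D + B * D)) +
          φ ((2^k : ℕ) • (star D * B)) + φ ((2^k : ℕ) • (star D * D))) -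
        (φ ((2^k : ℕ) • (A * B + B * star A)) + φ ((2^k : ℕ) • (A * D)) +
          (φ ((2^k : ℕ) • (B * D)) + φ ((2^k : ℕ) • (star D * B)) +
            φ ((2^k : ℕ) • (star D * D)))) := by abel
    rw [E1] at h2
    rw [sub_self] at h2
    exact sub_eq_zero.mp h2
  exact hfin

end CStarAux3
section CStarFinal

variable {𝔄 𝔄' : Type*} [CStarAlgebra 𝔄] [CStarAlgebra 𝔄']
variable {φ : 𝔄 → 𝔄'} {k : ℕ} {p q : 𝔄}

/-- Diagonal additivity. -/
lemma diag_add (H : Hyp φ k p q) (spadeP : ∀ X : 𝔄, (∀ A : 𝔄, X * A * p = 0) → X = 0)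
    (spadeQ : ∀ X : 𝔄, (∀ A : 𝔄, X * A * q = 0) → X = 0)
    {A B : 𝔄} (hA : p * A * p = A) (hB : p * B * p = B) : φ (A + B) = φ A + φ B := by
  obtain ⟨T, hT⟩ := H.surj (φ A + φ B)
  have e1 : φ ((2^k : ℕ) • jstar q T) = φ ((2^k : ℕ) • (0 : 𝔄)) := by
    rw [H.splitR hT q, jproj_opp H.hqs H.hqp H.hpq H.hpp hA,
      jproj_opp H.hqs H.hqp H.hpq H.hpp hB, smul_zero, H.h0, add_zero]
  have f1 : q * T + T * q = 0 := by
    have := H.pcancel e1; rw [jstar_def, H.hqs] at this; exact this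
  obtain ⟨g1, g2, g3⟩ := comps H.hqq H.hpq H.hqp f1
  rw [mul_zero, zero_mul] at g1 g2 g3
  have g3' := half0 g3
  have hdec := decomp H.hpq1 T
  rw [g1, g2, g3', add_zero, add_zero, add_zero] at hdec
  -- hdec : T = p * T * p
  have htc : p * (p * T * p) * p = p * T * p := corner_idem H.hpp H.hpp T
  have hstc : p * star (p * T * p) * p = star (p * T * p) := star_corner H.hps H.hps htc
  have key : ∀ C : 𝔄, (p * T * p - (A + B)) * C * q = 0 := by
    intro C
    have hDc : p * (p * C * q) * q = p * C * q := corner_idem H.hpp H.hqq C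
    have hDl : p * (p * C * q) = p * C * q := corner_left H.hpp hDc
    have hDr : (p * C * q) * q = p * C * q := corner_right H.hqq hDc
    have jT : jstar T (p * C * q) = (p * T * p) * (p * C * q) := by
      rw [jstar_def]
      conv_lhs => rw [hdec]
      rw [mzh hDr (corner_left H.hpp hstc) H.hqp, add_zero]
    have jA : jstar A (p * C * q) = A * (p * C * q) := by
      rw [jstar_def, mzh hDr (corner_left H.hpp (star_corner H.hps H.hps hA)) H.hqp, add_zero]
    have jB : jstar B (p * C * q) = B * (p * C * q) := by
      rw [jstar_def, mzh hDr (corner_left H.hpp (star_corner H.hps H.hps hB)) H.hqp, add_zero]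
    have e2 := H.splitL hT (p * C * q)
    rw [jT, jA, jB, ← merge12 H spadeP spadeQ hA hB hDc] at e2
    have h2 := H.pcancel e2
    have h3 : (p * T * p - (A + B)) * (p * C * q) = 0 := by
      rw [sub_mul, h2, add_mul, sub_self]
    have hXp : (p * T * p - (A + B)) * p = p * T * p - (A + B) := by
      rw [sub_mul, corner_right H.hpp htc, add_mul, corner_right H.hpp hA,
        corner_right H.hpp hB]
    rw [← mul_assoc, ← mul_assoc, hXp] at h3
    exact h3
  have hta : p * T * p = A + B := sub_eq_zero.mp (spadeQ _ key)
  rw [hdec, hta] at hT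
  exact hT

end CStarFinal

theorem stmt8 {𝔄 𝔄' : Type*} [CStarAlgebra 𝔄] [CStarAlgebra 𝔄']
    (n : ℕ) (hn : 2 ≤ n)
    (P₁ : 𝔄) (hproj : P₁ * P₁ = P₁) (hsa : star P₁ = P₁) (hne0 : P₁ ≠ 0) (hne1 : P₁ ≠ 1)
    (φ : 𝔄 → 𝔄') (hbij : Function.Bijective φ) (hunital : φ 1 = 1)
    (hqI : ∀ A B : 𝔄, φ (qstar (List.replicate (n - 2) 1 ++ [A, B])) =
      qstar (List.replicate (n - 2) (φ 1) ++ [φ A, φ B]))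
    (hqP : ∀ P ∈ ({P₁, 1 - P₁} : Set 𝔄), ∀ A B : 𝔄,
      φ (qstar (List.replicate (n - 2) P ++ [A, B])) =
      qstar (List.replicate (n - 2) (φ P) ++ [φ A, φ B]))
    (hspade : ∀ P ∈ ({P₁, 1 - P₁} : Set 𝔄), ∀ X : 𝔄, (∀ A : 𝔄, X * A * P = 0) → X = 0) :
    ∀ P ∈ ({P₁, 1 - P₁} : Set 𝔄), ∀ A B : 𝔄, P * A * P = A → P * B * P = B →
      φ (A + B) = φ A + φ B := by
  intro P hP A B hA hB
  have hM : ∀ X Y : 𝔄, φ ((2^(n-2) : ℕ) • jstar X Y) = (2^(n-2) : ℕ) • jstar (φ X) (φ Y) := by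
    intro X Y
    have h := hqI X Y
    rw [hunital, qstar_ones, qstar_ones] at h
    exact h
  have h0 : φ 0 = 0 := by
    obtain ⟨Z, hZ⟩ := hbij.2 0
    have h := hM Z 0
    rw [hZ] at h
    simpa [jstar] using h
  have hPcases : P = P₁ ∨ P = 1 - P₁ := by
    simpa [Set.mem_insert_iff, Set.mem_singleton_iff] using hP
  have hPP : P * P = P := by
    rcases hPcases with rfl | rfl
    · exact hproj
    · exact proj_compl_sq hproj
  have hPs : star P = P := by
    rcases hPcases with rfl | rfl
    · exact hsa
    · rw [star_sub, star_one, hsa]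
  have memQ : (1 - P) ∈ ({P₁, 1 - P₁} : Set 𝔄) := by
    rcases hPcases with rfl | rfl
    · exact Set.mem_insert_of_mem _ rfl
    · rw [sub_sub_cancel]; exact Set.mem_insert _ _
  have H : Hyp φ (n - 2) P (1 - P) :=
    ⟨hM, hbij.1, hbij.2, h0, hPP, hPs, proj_compl_sq hPP,
      by rw [star_sub, star_one, hPs], proj_mul_compl hPP, compl_mul_proj hPP, by abel⟩
  exact diag_add H (hspade P hP) (hspade (1 - P) memQ) hA hB
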